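/- Monotonicity of growth rate under equivariant retracts: Let G be a group generated by a finite symmetric set S and H a group generated by a finite symmetric set T. Let A : G → G and B : H → H be group endomorphisms, and let ι : H → G and r : G → H be group homomorphisms with r ∘ ι = id_H and A ∘ ι = ι ∘ B. Then γ_B ≤ γ_A, where the growth rates are computed with respect to T and S respectively. (This is the second inequality established in the proof of Theorem 5.2, using that a retract inclusion coarsely preserves word length.) -/

import Mathlib

set_option maxHeartbeats 1000000


open Filter
open scoped ENNReal

/-- The word length of `g` with respect to a generating set `S`: the least `n`
such that `g` is a product of `n` elements of `S` (so the identity has length `0`). -/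
noncomputable def wordLength {G : Type*} [Group G] (S : Set G) (g : G) : ℕ :=
  sInf {n : ℕ | ∃ l : List G, l.length = n ∧ (∀ x ∈ l, x ∈ S) ∧ l.prod = g}

/-- The growth rate of a group endomorphism `A : G → G` with respect to a
generating set `S`:
`γ_A = sup_{g ∈ G} limsup_{n → ∞} (1/n)·log(max(ℓ_S(Aⁿ(g)), 1))`, valued in `[0, ∞]`. -/
noncomputable def growthRate {G : Type*} [Group G] (S : Set G) (A : G →* G) : ℝ≥0∞ :=
  ⨆ g : G, Filter.atTop.limsup fun n : ℕ =>
    ENNReal.ofReal (Real.log ((max (wordLength S ((⇑A)^[n] g)) 1 : ℕ) : ℝ) / (n : ℝ))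

lemma exists_word {G : Type*} [Group G] {S : Set G} (hSsym : S⁻¹ = S)
    (hSgen : Subgroup.closure S = ⊤) (g : G) :
    ∃ l : List G, (∀ x ∈ l, x ∈ S) ∧ l.prod = g := by
  have hg : g ∈ (Subgroup.closure S).toSubmonoid := by rw [hSgen]; trivial
  rw [Subgroup.closure_toSubmonoid, Set.union_comm, hSsym, Set.union_self] at hg
  exact Submonoid.exists_list_of_mem_closure hg

lemma wordSet_nonempty {G : Type*} [Group G] {S : Set G} (hSsym : S⁻¹ = S)
    (hSgen : Subgroup.closure S = ⊤) (g : G) :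
    {n : ℕ | ∃ l : List G, l.length = n ∧ (∀ x ∈ l, x ∈ S) ∧ l.prod = g}.Nonempty := by
  obtain ⟨l, hl, hp⟩ := exists_word hSsym hSgen g
  exact ⟨l.length, l, rfl, hl, hp⟩

lemma exists_minimal_word {G : Type*} [Group G] {S : Set G} (hSsym : S⁻¹ = S)
    (hSgen : Subgroup.closure S = ⊤) (g : G) :
    ∃ l : List G, l.length = wordLength S g ∧ (∀ x ∈ l, x ∈ S) ∧ l.prod = g :=
  Nat.sInf_mem (wordSet_nonempty hSsym hSgen g)

lemma wordLength_le_of_word {G : Type*} [Group G] {S : Set G} {g : G} {l : List G}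
    (hl : ∀ x ∈ l, x ∈ S) (hp : l.prod = g) : wordLength S g ≤ l.length :=
  Nat.sInf_le ⟨l, rfl, hl, hp⟩

lemma wordLength_one {G : Type*} [Group G] (S : Set G) : wordLength S 1 = 0 :=
  Nat.le_zero.mp (wordLength_le_of_word (l := []) (by simp) (by simp))

lemma wordLength_mul_le {G : Type*} [Group G] {S : Set G} (hSsym : S⁻¹ = S)
    (hSgen : Subgroup.closure S = ⊤) (x y : G) :
    wordLength S (x * y) ≤ wordLength S x + wordLength S y := by
  obtain ⟨lx, hlx, hx, hpx⟩ := exists_minimal_word hSsym hSgen x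
  obtain ⟨ly, hly, hy, hpy⟩ := exists_minimal_word hSsym hSgen y
  have := wordLength_le_of_word (S := S) (g := x * y) (l := lx ++ ly)
    (by intro a ha; rcases List.mem_append.mp ha with h | h; exacts [hx a h, hy a h])
    (by rw [List.prod_append, hpx, hpy])
  simpa [hlx, hly] using this

/-- Key comparison: if a homomorphism `φ` sends each generator in `S` to an element of
`T`-word-length at most `C`, then `ℓ_T (φ g) ≤ C * ℓ_S g`. -/
lemma wordLength_map_le {G H : Type*} [Group G] [Group H] {S : Set G} {T : Set H}
    (hSsym : S⁻¹ = S) (hSgen : Subgroup.closure S = ⊤)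
    (hTsym : T⁻¹ = T) (hTgen : Subgroup.closure T = ⊤)
    (φ : G →* H) {C : ℕ} (hC : ∀ s ∈ S, wordLength T (φ s) ≤ C) (g : G) :
    wordLength T (φ g) ≤ C * wordLength S g := by
  obtain ⟨l, hl, hmem, hprod⟩ := exists_minimal_word hSsym hSgen g
  rw [← hl, ← hprod]
  clear hl hprod
  induction l with
  | nil => simp [wordLength_one]
  | cons a l ih =>
    have ha : a ∈ S := hmem a List.mem_cons_self
    have hl' : ∀ x ∈ l, x ∈ S := fun x hx => hmem x (List.mem_cons_of_mem a hx)
    calc wordLength T (φ (a * l.prod)) ≤ wordLength T (φ a) + wordLength T (φ l.prod) := by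
          rw [map_mul]; exact wordLength_mul_le hTsym hTgen _ _
      _ ≤ C + C * l.length := add_le_add (hC a ha) (ih hl')
      _ = C * (a :: l).length := by rw [List.length_cons, Nat.mul_succ, Nat.add_comm]

/-- Monotonicity of growth rate under equivariant retracts: if `ι : H → G` and
`r : G → H` are homomorphisms with `r ∘ ι = id_H` and `A ∘ ι = ι ∘ B`, then
`γ_B ≤ γ_A`. -/
theorem growthRate_le_of_retract
    {G H : Type*} [Group G] [Group H]
    (S : Set G) (hSfin : S.Finite) (hSsym : S⁻¹ = S) (hSgen : Subgroup.closure S = ⊤)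
    (T : Set H) (hTfin : T.Finite) (hTsym : T⁻¹ = T) (hTgen : Subgroup.closure T = ⊤)
    (A : G →* G) (B : H →* H) (ι : H →* G) (r : G →* H)
    (hrι : r.comp ι = MonoidHom.id H) (hAι : A.comp ι = ι.comp B) :
    growthRate T B ≤ growthRate S A := by
  classical
  -- the constant controlling `ℓ_T ∘ r` in terms of `ℓ_S`
  set C : ℕ := hSfin.toFinset.sup (fun s => wordLength T (r s)) with hCdef
  have hC : ∀ s ∈ S, wordLength T (r s) ≤ C := fun s hs =>
    Finset.le_sup (f := fun s => wordLength T (r s)) (hSfin.mem_toFinset.mpr hs)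
  set C' : ℕ := max C 1 with hC'def
  have hC'pos : (1 : ℕ) ≤ C' := le_max_right _ _
  -- key word-length comparison
  have hkey : ∀ g : G, wordLength T (r g) ≤ C * wordLength S g :=
    wordLength_map_le hSsym hSgen hTsym hTgen r hC
  refine iSup_le fun h => ?_
  refine le_trans ?_ (le_iSup _ (ι h))
  -- iterate equivariance
  have hiter : ∀ n : ℕ, (⇑A)^[n] (ι h) = ι ((⇑B)^[n] h) := by
    intro n
    induction n with
    | zero => simp
    | succ n ih =>
      rw [Function.iterate_succ_apply', Function.iterate_succ_apply', ih]
      exact DFunLike.congr_fun hAι ((⇑B)^[n] h)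
  -- pointwise comparison of the word lengths
  have hwl : ∀ n : ℕ,
      (max (wordLength T ((⇑B)^[n] h)) 1 : ℕ) ≤ C' * max (wordLength S ((⇑A)^[n] (ι h))) 1 := by
    intro n
    have h1 : (⇑B)^[n] h = r ((⇑A)^[n] (ι h)) := by
      rw [hiter n]
      exact (DFunLike.congr_fun hrι ((⇑B)^[n] h)).symm
    have h2 : wordLength T ((⇑B)^[n] h) ≤ C * wordLength S ((⇑A)^[n] (ι h)) := by
      rw [h1]; exact hkey _
    have h3 : C * wordLength S ((⇑A)^[n] (ι h)) ≤ C' * max (wordLength S ((⇑A)^[n] (ι h))) 1 :=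
      Nat.mul_le_mul (le_max_left _ _) (le_max_left _ _)
    refine max_le (h2.trans h3) ?_
    calc (1 : ℕ) = 1 * 1 := by ring
      _ ≤ C' * max (wordLength S ((⇑A)^[n] (ι h))) 1 := Nat.mul_le_mul hC'pos (le_max_right _ _)
  -- pass to logarithms
  set u : ℕ → ℝ≥0∞ := fun n =>
    ENNReal.ofReal (Real.log ((max (wordLength T ((⇑B)^[n] h)) 1 : ℕ) : ℝ) / (n : ℝ)) with hu
  set v : ℕ → ℝ≥0∞ := fun n =>
    ENNReal.ofReal (Real.log ((max (wordLength S ((⇑A)^[n] (ι h))) 1 : ℕ) : ℝ) / (n : ℝ)) with hv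
  set w : ℕ → ℝ≥0∞ := fun n => ENNReal.ofReal (Real.log (C' : ℝ) / (n : ℝ)) with hw
  have hle : ∀ n : ℕ, u n ≤ w n + v n := by
    intro n
    have hpos : (0 : ℝ) < ((max (wordLength S ((⇑A)^[n] (ι h))) 1 : ℕ) : ℝ) := by
      positivity
    have hlog : Real.log ((max (wordLength T ((⇑B)^[n] h)) 1 : ℕ) : ℝ) ≤
        Real.log (C' : ℝ) + Real.log ((max (wordLength S ((⇑A)^[n] (ι h))) 1 : ℕ) : ℝ) := by
      rw [← Real.log_mul (by exact_mod_cast Nat.one_le_iff_ne_zero.mp hC'pos) hpos.ne']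
      apply Real.log_le_log (by positivity)
      exact_mod_cast hwl n
    have hdiv : Real.log ((max (wordLength T ((⇑B)^[n] h)) 1 : ℕ) : ℝ) / (n : ℝ) ≤
        Real.log (C' : ℝ) / (n : ℝ) +
          Real.log ((max (wordLength S ((⇑A)^[n] (ι h))) 1 : ℕ) : ℝ) / (n : ℝ) := by
      rw [← add_div, div_eq_mul_inv, div_eq_mul_inv]
      exact mul_le_mul_of_nonneg_right hlog (by positivity)
    calc u n ≤ ENNReal.ofReal (Real.log (C' : ℝ) / (n : ℝ) +
          Real.log ((max (wordLength S ((⇑A)^[n] (ι h))) 1 : ℕ) : ℝ) / (n : ℝ)) :=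
          ENNReal.ofReal_le_ofReal hdiv
      _ ≤ w n + v n := ENNReal.ofReal_add_le
  have hlimw : Filter.Tendsto w atTop (nhds 0) := by
    rw [hw]
    rw [show (0 : ℝ≥0∞) = ENNReal.ofReal 0 by simp]
    apply ENNReal.tendsto_ofReal
    simpa using Filter.Tendsto.const_div_atTop tendsto_natCast_atTop_atTop (Real.log (C' : ℝ))
  refine ENNReal.le_of_forall_pos_le_add fun ε hε _ => ?_
  have hev : ∀ᶠ n in atTop, u n ≤ v n + (ε : ℝ≥0∞) := by
    filter_upwards [hlimw.eventually_lt_const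
      (show (0 : ℝ≥0∞) < (ε : ℝ≥0∞) by exact_mod_cast hε)] with n hn
    refine (hle n).trans ?_
    rw [add_comm]
    exact add_le_add_right hn.le _
  have hmono : Monotone (fun x : ℝ≥0∞ => x + (ε : ℝ≥0∞)) :=
    fun a b hab => add_le_add_left hab _
  have hmap := (hmono.map_limsup_of_continuousAt (F := atTop) v
    ((continuous_id.add continuous_const).continuousAt)).symm
  calc Filter.atTop.limsup u ≤ Filter.atTop.limsup (fun n => v n + (ε : ℝ≥0∞)) :=
        Filter.limsup_le_limsup hev
    _ = Filter.atTop.limsup v + (ε : ℝ≥0∞) := hmap
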